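/- Assume Ric_G(e) < 0 (so ρ ≥ 1) and assume property (♠). Then every set E' of permissible insertions with Ric_{G+E'}(e) > 0 satisfies |E'| ≥ (ρ+1)/(2b), where b = q/(deg_G(v)+1). -/

import Mathlib

open Finset
open scoped Classical

variable {V : Type*}

/-- The open neighborhood of `u` in `G`, as a finset. -/
noncomputable def nbrF [Fintype V] (G : SimpleGraph V) (u : V) : Finset V :=
  Finset.univ.filter fun x => G.Adj u x

/-- The degree of `u` in `G`. -/
noncomputable def degG [Fintype V] (G : SimpleGraph V) (u : V) : ℕ := (nbrF G u).card

/-- The closed neighborhood `N[u]` of `u` in `G`. -/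
noncomputable def cnbr [Fintype V] (G : SimpleGraph V) (u : V) : Finset V :=
  insert u (nbrF G u)

/-- A transport plan for `(G,u,v)`: nonnegative, with row sums `1/(deg u + 1)` over
`N[u]` and column sums `1/(deg v + 1)` over `N[v]`. -/
def IsPlanG [Fintype V] (G : SimpleGraph V) (u v : V) (z : V → V → ℝ) : Prop :=
  (∀ x y, 0 ≤ z x y) ∧
  (∀ x ∈ cnbr G u, ∑ y ∈ cnbr G v, z x y = 1 / ((degG G u : ℝ) + 1)) ∧
  (∀ y ∈ cnbr G v, ∑ x ∈ cnbr G u, z x y = 1 / ((degG G v : ℝ) + 1))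

/-- The cost of a transport plan, with respect to shortest-path distance in `G`. -/
noncomputable def planCostG [Fintype V] (G : SimpleGraph V) (u v : V) (z : V → V → ℝ) : ℝ :=
  ∑ x ∈ cnbr G u, ∑ y ∈ cnbr G v, (G.dist x y : ℝ) * z x y

/-- The earth mover's distance `EMD_G(u,v)`: the minimum cost of a transport plan. -/
noncomputable def EMDG [Fintype V] (G : SimpleGraph V) (u v : V) : ℝ :=
  sInf {t | ∃ z, IsPlanG G u v z ∧ planCostG G u v z = t}

/-- The Ollivier–Ricci curvature of the edge `{u,v}`. -/
noncomputable def RicG [Fintype V] (G : SimpleGraph V) (u v : V) : ℝ :=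
  1 - EMDG G u v

/-- The graph obtained from `G` by inserting every permissible pair `{x,y}` with
`x ∈ N_G(u)\{v}`, `y ∈ N_G(v)\{u}`, `x ≠ y`, `{x,y} ∉ E(G)`, as a new edge. -/
def addPerm (G : SimpleGraph V) (u v : V) : SimpleGraph V :=
  G ⊔ SimpleGraph.fromRel (fun x y => G.Adj u x ∧ x ≠ v ∧ G.Adj v y ∧ y ≠ u)

namespace Stmt10Aux

lemma mem_cnbr [Fintype V] {G : SimpleGraph V} {u t : V} :
    t ∈ cnbr G u ↔ t = u ∨ G.Adj u t := by
  simp [cnbr, nbrF]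

lemma card_cnbr [Fintype V] (G : SimpleGraph V) (u : V) :
    (cnbr G u).card = degG G u + 1 := by
  have : u ∉ nbrF G u := by simp [nbrF]
  simp [cnbr, Finset.card_insert_of_notMem this, degG]

lemma adj_u_pres [Fintype V] {G G' : SimpleGraph V} {u v : V}
    (h1 : G ≤ G') (h2 : G' ≤ addPerm G u v) (t : V) :
    G'.Adj u t ↔ G.Adj u t := by
  constructor
  · intro h
    rcases (SimpleGraph.sup_adj _ _ _ _).mp (h2 h) with h | h
    · exact h
    · rcases (SimpleGraph.fromRel_adj _ _ _).mp h with ⟨hne, h | h⟩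
      · exact absurd h.1 (G.irrefl)
      · exact absurd rfl h.2.2.2
  · exact fun h => h1 h

lemma adj_v_pres [Fintype V] {G G' : SimpleGraph V} {u v : V}
    (h1 : G ≤ G') (h2 : G' ≤ addPerm G u v) (t : V) :
    G'.Adj v t ↔ G.Adj v t := by
  constructor
  · intro h
    rcases (SimpleGraph.sup_adj _ _ _ _).mp (h2 h) with h | h
    · exact h
    · rcases (SimpleGraph.fromRel_adj _ _ _).mp h with ⟨hne, h | h⟩
      · exact absurd rfl h.2.1
      · exact absurd h.2.2.1 (G.irrefl)
  · exact fun h => h1 h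

lemma cnbr_pres [Fintype V] {G G' : SimpleGraph V} {t : V}
    (h : ∀ s, G'.Adj t s ↔ G.Adj t s) : cnbr G' t = cnbr G t := by
  unfold cnbr nbrF
  congr 1
  apply Finset.filter_congr
  intro x _
  exact h x

lemma degG_pres [Fintype V] {G G' : SimpleGraph V} {t : V}
    (h : ∀ s, G'.Adj t s ↔ G.Adj t s) : degG G' t = degG G t := by
  unfold degG nbrF
  congr 1
  apply Finset.filter_congr
  intro x _
  exact h x

lemma walk_to_center [Fintype V] {G : SimpleGraph V} {t x : V} (h : x ∈ cnbr G t) :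
    ∃ p : G.Walk x t, p.length ≤ 1 := by
  rcases mem_cnbr.mp h with rfl | h
  · exact ⟨SimpleGraph.Walk.nil, by simp⟩
  · exact ⟨h.symm.toWalk, by simp⟩

lemma walk_from_center [Fintype V] {G : SimpleGraph V} {t y : V} (h : y ∈ cnbr G t) :
    ∃ p : G.Walk t y, p.length ≤ 1 := by
  rcases mem_cnbr.mp h with rfl | h
  · exact ⟨SimpleGraph.Walk.nil, by simp⟩
  · exact ⟨h.toWalk, by simp⟩

lemma dist_le_two_cnbr [Fintype V] {G : SimpleGraph V} {t x y : V}
    (hx : x ∈ cnbr G t) (hy : y ∈ cnbr G t) : G.dist x y ≤ 2 := by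
  obtain ⟨p, hp⟩ := walk_to_center hx
  obtain ⟨q, hq⟩ := walk_from_center hy
  calc G.dist x y ≤ (p.append q).length := SimpleGraph.dist_le _
    _ = p.length + q.length := SimpleGraph.Walk.length_append _ _
    _ ≤ 2 := by omega

lemma dist_le_three [Fintype V] {G : SimpleGraph V} {u v x y : V} (huv : G.Adj u v)
    (hx : x ∈ cnbr G u) (hy : y ∈ cnbr G v) : G.dist x y ≤ 3 ∧ G.Reachable x y := by
  obtain ⟨p, hp⟩ := walk_to_center hx
  obtain ⟨q, hq⟩ := walk_from_center hy
  refine ⟨?_, ⟨p.append (SimpleGraph.Walk.cons huv q)⟩⟩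
  calc G.dist x y ≤ (p.append (SimpleGraph.Walk.cons huv q)).length := SimpleGraph.dist_le _
    _ = p.length + (q.length + 1) := by
        rw [SimpleGraph.Walk.length_append, SimpleGraph.Walk.length_cons]
    _ ≤ 3 := by omega

lemma dist_mono [Fintype V] {G G' : SimpleGraph V} {x y : V}
    (h : G ≤ G') (hr : G.Reachable x y) : G'.dist x y ≤ G.dist x y := by
  obtain ⟨p, hp⟩ := hr.exists_walk_length_eq_dist
  calc G'.dist x y ≤ (p.mapLe h).length := SimpleGraph.dist_le _
    _ = p.length := by simp [SimpleGraph.Walk.mapLe]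
    _ = G.dist x y := hp

/-- Geometric core: a strictly reduced non-adjacent pair forces a new edge into `y`. -/
lemma geo [Fintype V] {G G' : SimpleGraph V} {u v : V} (huv : G.Adj u v)
    (h1 : G ≤ G') (h2 : G' ≤ addPerm G u v)
    (hsp2 : ∀ x y : V, G.Adj v x → G.Adj v y → x ≠ u → y ≠ u → ¬ G.Adj x y)
    {x y : V} (hx : x ∈ cnbr G u) (hy : y ∈ cnbr G v)
    (hlt : G'.dist x y < G.dist x y) (hnadj : ¬ G'.Adj x y) :
    ∃ w, G'.Adj w y ∧ ¬ G.Adj w y := by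
  obtain ⟨hd3, hreach⟩ := dist_le_three huv hx hy
  have hne : x ≠ y := by
    rintro rfl
    have h0 : G.dist x x = 0 := SimpleGraph.dist_self
    omega
  have hreach' : G'.Reachable x y := hreach.mono h1
  have hpos' : 0 < G'.dist x y := hreach'.pos_dist_of_ne hne
  have hne1 : G'.dist x y ≠ 1 := by
    simp only [ne_eq, SimpleGraph.dist_eq_one_iff_adj]
    exact hnadj
  have hdG : G.dist x y = 3 := by omega
  have hdG' : G'.dist x y = 2 := by omega
  -- x ∉ N[v] and y ∉ N[u]
  have hxnv : x ∉ cnbr G v := by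
    intro h
    have := dist_le_two_cnbr h hy
    omega
  have hynu : y ∉ cnbr G u := by
    intro h
    have := dist_le_two_cnbr hx h
    omega
  have hvy : G.Adj v y := by
    rcases mem_cnbr.mp hy with rfl | h
    · exfalso
      obtain ⟨p, hplen⟩ := walk_to_center hx
      have : G.dist x y ≤ 2 := by
        calc G.dist x y ≤ (p.append huv.toWalk).length := SimpleGraph.dist_le _
          _ = p.length + 1 := by simp
          _ ≤ 2 := by omega
      omega
    · exact h
  have hyu : y ≠ u := fun h => hynu (h ▸ mem_cnbr.mpr (Or.inl rfl))
  have hnvx : ¬ G.Adj v x := fun h => hxnv (mem_cnbr.mpr (Or.inr h))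
  -- extract the middle vertex of a walk of length 2 in G'
  obtain ⟨p, hp⟩ := hreach'.exists_walk_length_eq_dist
  rw [hdG'] at hp
  cases p with
  | nil => simp at hp
  | @cons _ w _ hxw q =>
    cases q with
    | nil => simp at hp
    | @cons _ y' _ hwy' q2 =>
      have hq2 : q2.length = 0 := by
        simp only [SimpleGraph.Walk.length_cons] at hp
        omega
      have hy'y : y' = y := SimpleGraph.Walk.eq_of_length_eq_zero hq2
      rw [hy'y] at hwy'
      refine ⟨w, hwy', ?_⟩
      intro hwyG
      have hnxw : ¬ G.Adj x w := by
        intro hxwG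
        have : G.dist x y ≤ 2 := by
          calc G.dist x y ≤ (SimpleGraph.Walk.cons hxwG hwyG.toWalk).length :=
                SimpleGraph.dist_le _
            _ = 2 := by simp
        omega
      rcases (SimpleGraph.sup_adj _ _ _ _).mp (h2 hxw) with h | h
      · exact hnxw h
      · rcases (SimpleGraph.fromRel_adj _ _ _).mp h with ⟨_, h | h⟩
        · exact hsp2 w y h.2.2.1 hvy h.2.2.2 hyu hwyG
        · exact hnvx h.2.2.1
noncomputable def chooseW (G G' : SimpleGraph V) (p : V × V) : V :=
  if h : ∃ w, G'.Adj w p.2 ∧ ¬ G.Adj w p.2 then h.choose else p.1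

lemma chooseW_spec {G G' : SimpleGraph V} {p : V × V}
    (h : ∃ w, G'.Adj w p.2 ∧ ¬ G.Adj w p.2) :
    G'.Adj (chooseW G G' p) p.2 ∧ ¬ G.Adj (chooseW G G' p) p.2 := by
  rw [chooseW, dif_pos h]
  exact h.choose_spec

noncomputable def sigmaE (G G' : SimpleGraph V) (p : V × V) : Sym2 V :=
  if G'.Adj p.1 p.2 then s(p.1, p.2) else s(chooseW G G' p, p.2)

lemma sigmaE_of_adj {G G' : SimpleGraph V} {p : V × V} (h : G'.Adj p.1 p.2) :
    sigmaE G G' p = s(p.1, p.2) := by rw [sigmaE, if_pos h]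

lemma sigmaE_of_not_adj {G G' : SimpleGraph V} {p : V × V} (h : ¬ G'.Adj p.1 p.2) :
    sigmaE G G' p = s(chooseW G G' p, p.2) := by rw [sigmaE, if_neg h]

lemma sigmaE_snd (G G' : SimpleGraph V) (p : V × V) :
    ∃ t, sigmaE G G' p = s(t, p.2) := by
  by_cases h : G'.Adj p.1 p.2
  · exact ⟨p.1, sigmaE_of_adj h⟩
  · exact ⟨chooseW G G' p, sigmaE_of_not_adj h⟩
end Stmt10Aux

namespace Stmt10Aux

lemma exists_plan [Fintype V] (G : SimpleGraph V) (u v : V) :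
    ∃ z : V → V → ℝ, IsPlanG G u v z := by
  have hu0 : ((degG G u : ℝ) + 1) ≠ 0 := by positivity
  have hv0 : ((degG G v : ℝ) + 1) ≠ 0 := by positivity
  refine ⟨fun _ _ => 1 / (((degG G u : ℝ) + 1) * ((degG G v : ℝ) + 1)), ?_, ?_, ?_⟩
  · intro x y
    positivity
  · intro x _
    rw [Finset.sum_const, card_cnbr, nsmul_eq_mul]
    push_cast
    field_simp
    try ring
  · intro y _
    rw [Finset.sum_const, card_cnbr, nsmul_eq_mul]
    push_cast
    field_simp
    try ring

lemma planCost_nonneg [Fintype V] {G : SimpleGraph V} {u v : V} {z : V → V → ℝ}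
    (hz : IsPlanG G u v z) : 0 ≤ planCostG G u v z := by
  apply Finset.sum_nonneg
  intro x _
  apply Finset.sum_nonneg
  intro y _
  exact mul_nonneg (by positivity) (hz.1 x y)

end Stmt10Aux

set_option maxHeartbeats 1000000 in
/-- assume `Ric_G(e) < 0` and property (♠).  Then every set `E'` of
permissible insertions making the curvature of `e` positive has
`|E'| ≥ (ρ+1)/(2b)`, where `q = lcm(deg_G(u)+1, deg_G(v)+1)`,
`ρ = q·EMD_G(u,v) − q`, and `b = q/(deg_G(v)+1)`.  (A graph `G'` with
`G ≤ G' ≤ G*` is exactly `G + E'` for a set `E'` of permissible insertions, with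
`E' = E(G') \ E(G)`.) -/
theorem stmt10 [Fintype V] (G : SimpleGraph V) (u v : V) (huv : G.Adj u v)
    (hdeg : degG G u ≤ degG G v)
    (q : ℕ) (hq : q = Nat.lcm (degG G u + 1) (degG G v + 1))
    (ρ : ℤ) (hρ : (ρ : ℝ) = (q : ℝ) * EMDG G u v - (q : ℝ))
    (b : ℕ) (hb : b = q / (degG G v + 1))
    (hneg : RicG G u v < 0)
    (hsp1 : ∀ x y : V, G.Adj u x → G.Adj u y → x ≠ v → y ≠ v → ¬ G.Adj x y)
    (hsp2 : ∀ x y : V, G.Adj v x → G.Adj v y → x ≠ u → y ≠ u → ¬ G.Adj x y) :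
    ∀ G' : SimpleGraph V, G ≤ G' → G' ≤ addPerm G u v → 0 < RicG G' u v →
      ((ρ : ℝ) + 1) / (2 * (b : ℝ)) ≤ ((G'.edgeSet \ G.edgeSet).ncard : ℝ) := by
  intro G' hle1 hle2 hpos
  -- neighborhoods of u and v are preserved
  have hadju := Stmt10Aux.adj_u_pres (G := G) (G' := G') (u := u) (v := v) hle1 hle2
  have hadjv := Stmt10Aux.adj_v_pres (G := G) (G' := G') (u := u) (v := v) hle1 hle2
  have hcu : cnbr G' u = cnbr G u := Stmt10Aux.cnbr_pres hadju
  have hcv : cnbr G' v = cnbr G v := Stmt10Aux.cnbr_pres hadjv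
  have hdu : degG G' u = degG G u := Stmt10Aux.degG_pres hadju
  have hdv : degG G' v = degG G v := Stmt10Aux.degG_pres hadjv
  set cv : ℝ := (degG G v : ℝ) + 1 with hcvdef
  have hcv0 : (0:ℝ) < cv := by positivity
  -- the set of inserted edges
  have hfin : (G'.edgeSet \ G.edgeSet).Finite := Set.toFinite _
  set D := hfin.toFinset with hD
  set n := D.card with hn
  have hncard : (G'.edgeSet \ G.edgeSet).ncard = n := Set.ncard_eq_toFinset_card _ hfin
  have hDmem : ∀ e : Sym2 V, e ∈ D ↔ e ∈ G'.edgeSet ∧ e ∉ G.edgeSet := by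
    intro e
    rw [hD, Set.Finite.mem_toFinset]
    exact Iff.rfl
  -- obtain a transport plan for G' of cost < 1
  have hEMD' : EMDG G' u v < 1 := by
    unfold RicG at hpos
    linarith
  obtain ⟨z0, hz0⟩ := Stmt10Aux.exists_plan G' u v
  have hSne : {t | ∃ z, IsPlanG G' u v z ∧ planCostG G' u v z = t}.Nonempty :=
    ⟨planCostG G' u v z0, z0, hz0, rfl⟩
  have hEMD'' : sInf {t | ∃ z, IsPlanG G' u v z ∧ planCostG G' u v z = t} < 1 := hEMD'
  obtain ⟨t, ht, htlt⟩ := exists_lt_of_csInf_lt hSne hEMD''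
  obtain ⟨z, hzplan', rfl⟩ := ht
  -- z is also a transport plan for G
  have hzplan : IsPlanG G u v z := by
    unfold IsPlanG at hzplan' ⊢
    rw [hcu, hcv, hdu, hdv] at hzplan'
    exact hzplan'
  -- EMD_G is at most the G-cost of z
  have hbdd : BddBelow {t | ∃ z, IsPlanG G u v z ∧ planCostG G u v z = t} := by
    refine ⟨0, ?_⟩
    rintro t ⟨z', hz', rfl⟩
    exact Stmt10Aux.planCost_nonneg hz'
  have hEMDle : EMDG G u v ≤ planCostG G u v z := csInf_le hbdd ⟨z, hzplan, rfl⟩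
  -- the reduction sum
  set f : V × V → ℝ :=
    fun p => ((G.dist p.1 p.2 : ℝ) - (G'.dist p.1 p.2 : ℝ)) * z p.1 p.2 with hf
  set P := (cnbr G u ×ˢ cnbr G v).filter
    (fun p => G'.dist p.1 p.2 < G.dist p.1 p.2) with hP
  have hfacts : ∀ p ∈ P, p.1 ∈ cnbr G u ∧ p.2 ∈ cnbr G v ∧
      G'.dist p.1 p.2 < G.dist p.1 p.2 := by
    intro p hp
    rw [hP, Finset.mem_filter, Finset.mem_product] at hp
    exact ⟨hp.1.1, hp.1.2, hp.2⟩
  have hreachall : ∀ p : V × V, p.1 ∈ cnbr G u → p.2 ∈ cnbr G v →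
      G'.dist p.1 p.2 ≤ G.dist p.1 p.2 := by
    intro p h1 h2
    exact Stmt10Aux.dist_mono hle1 (Stmt10Aux.dist_le_three huv h1 h2).2
  -- cost identity
  have hcostG : planCostG G u v z = planCostG G' u v z + ∑ p ∈ cnbr G u ×ˢ cnbr G v, f p := by
    unfold planCostG
    rw [hcu, hcv, Finset.sum_product, ← Finset.sum_add_distrib]
    apply Finset.sum_congr rfl
    intro x _
    rw [← Finset.sum_add_distrib]
    apply Finset.sum_congr rfl
    intro y _
    simp only [hf]
    ring
  have hsum2 : ∑ p ∈ P, f p = ∑ p ∈ cnbr G u ×ˢ cnbr G v, f p := by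
    apply Finset.sum_filter_of_ne
    intro p hp hfp
    rw [Finset.mem_product] at hp
    have hle := hreachall p hp.1 hp.2
    rcases lt_or_eq_of_le hle with h | h
    · exact h
    · exfalso
      apply hfp
      simp [hf, h]
  -- distance facts on reduced pairs
  have hdistfacts : ∀ p ∈ P, G.dist p.1 p.2 ≤ 3 ∧ 1 ≤ G'.dist p.1 p.2 ∧
      G'.dist p.1 p.2 < G.dist p.1 p.2 := by
    intro p hp
    obtain ⟨h1p, h2p, hplt⟩ := hfacts p hp
    have h3 := Stmt10Aux.dist_le_three huv h1p h2p
    have hne : p.1 ≠ p.2 := by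
      intro h
      rw [h] at hplt
      have h0 : G.dist p.2 p.2 = 0 := SimpleGraph.dist_self
      omega
    have hposd : 0 < G'.dist p.1 p.2 := (h3.2.mono hle1).pos_dist_of_ne hne
    exact ⟨h3.1, hposd, hplt⟩
  have hred2 : ∀ p ∈ P, ((G.dist p.1 p.2 : ℝ) - (G'.dist p.1 p.2 : ℝ)) ≤ 2 := by
    intro p hp
    obtain ⟨hd3, hd1, _⟩ := hdistfacts p hp
    have c1 : (G.dist p.1 p.2 : ℝ) ≤ 3 := by exact_mod_cast hd3
    have c2 : (1:ℝ) ≤ (G'.dist p.1 p.2 : ℝ) := by exact_mod_cast hd1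
    linarith
  -- the charge map sends P into D
  have hmaps : ∀ p ∈ P, Stmt10Aux.sigmaE G G' p ∈ D := by
    intro p hp
    obtain ⟨h1p, h2p, hplt⟩ := hfacts p hp
    obtain ⟨hd3, hd1, _⟩ := hdistfacts p hp
    by_cases hA : G'.Adj p.1 p.2
    · rw [Stmt10Aux.sigmaE_of_adj hA, hDmem]
      refine ⟨G'.mem_edgeSet.mpr hA, ?_⟩
      intro hmem
      have hGadj := G.mem_edgeSet.mp hmem
      have h1 : G.dist p.1 p.2 = 1 := SimpleGraph.dist_eq_one_iff_adj.mpr hGadj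
      omega
    · have hC := Stmt10Aux.geo huv hle1 hle2 hsp2 h1p h2p hplt hA
      rw [Stmt10Aux.sigmaE_of_not_adj hA, hDmem]
      obtain ⟨hw1, hw2⟩ := Stmt10Aux.chooseW_spec hC
      exact ⟨G'.mem_edgeSet.mpr hw1,
        fun hmem => hw2 (G.mem_edgeSet.mp hmem)⟩
  -- the column bound
  have hcol : ∀ (S : Finset (V × V)) (y0 : V) (K : ℝ), 0 ≤ K → (∀ p ∈ S, p ∈ P) →
      (∀ p ∈ S, p.2 = y0) →
      (∀ p ∈ S, ((G.dist p.1 p.2 : ℝ) - (G'.dist p.1 p.2 : ℝ)) ≤ K) →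
      ∑ p ∈ S, f p ≤ K / cv := by
    intro S y0 K hK hSP hSy hSr
    rcases S.eq_empty_or_nonempty with rfl | ⟨p0, hp0⟩
    · rw [Finset.sum_empty]
      exact div_nonneg hK (le_of_lt hcv0)
    have hy0 : y0 ∈ cnbr G v := by
      have := (hfacts p0 (hSP p0 hp0)).2.1
      rwa [hSy p0 hp0] at this
    have hinj : ∀ p ∈ S, ∀ p' ∈ S, p.1 = p'.1 → p = p' := by
      intro p hp p' hp' hpp
      exact Prod.ext hpp (by rw [hSy p hp, hSy p' hp'])
    have step1 : ∑ p ∈ S, f p ≤ ∑ p ∈ S, K * z p.1 y0 := by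
      apply Finset.sum_le_sum
      intro p hp
      have hzp := hzplan.1 p.1 p.2
      have hr := hSr p hp
      have h2 := hSy p hp
      calc f p = ((G.dist p.1 p.2 : ℝ) - (G'.dist p.1 p.2 : ℝ)) * z p.1 p.2 := rfl
        _ ≤ K * z p.1 p.2 := mul_le_mul_of_nonneg_right hr hzp
        _ = K * z p.1 y0 := by rw [h2]
    have step2 : K * ∑ x ∈ S.image Prod.fst, z x y0 = ∑ p ∈ S, K * z p.1 y0 := by
      rw [Finset.sum_image hinj, ← Finset.mul_sum]
    have step3 : ∑ x ∈ S.image Prod.fst, z x y0 ≤ ∑ x ∈ cnbr G u, z x y0 := by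
      apply Finset.sum_le_sum_of_subset_of_nonneg
      · intro x hx
        obtain ⟨p, hp, rfl⟩ := Finset.mem_image.mp hx
        exact (hfacts p (hSP p hp)).1
      · intro x _ _
        exact hzplan.1 x y0
    have step4 : ∑ x ∈ cnbr G u, z x y0 = 1 / cv := hzplan.2.2 y0 hy0
    calc ∑ p ∈ S, f p ≤ K * ∑ x ∈ S.image Prod.fst, z x y0 := by
          rw [step2]; exact step1
      _ ≤ K * ∑ x ∈ cnbr G u, z x y0 := mul_le_mul_of_nonneg_left step3 hK
      _ = K * (1 / cv) := by rw [step4]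
      _ = K / cv := by ring
  -- the per-edge bound
  have key4 : ∀ e ∈ D, ∑ p ∈ P.filter (fun p => Stmt10Aux.sigmaE G G' p = e), f p ≤ 2 / cv := by
    intro e he
    clear he
    induction e using Sym2.ind with
    | _ a c =>
    set F := P.filter (fun p => Stmt10Aux.sigmaE G G' p = s(a, c)) with hFdef
    have hFP : ∀ p ∈ F, p ∈ P := fun p hp => (Finset.mem_filter.mp hp).1
    have hFσ : ∀ p ∈ F, Stmt10Aux.sigmaE G G' p = s(a, c) :=
      fun p hp => (Finset.mem_filter.mp hp).2
    have hsnd : ∀ p ∈ F, p.2 = c ∨ p.2 = a := by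
      intro p hp
      obtain ⟨t, ht⟩ := Stmt10Aux.sigmaE_snd G G' p
      have heq : s(t, p.2) = s(a, c) := ht.symm.trans (hFσ p hp)
      rcases Sym2.eq_iff.mp heq with ⟨_, h⟩ | ⟨_, h⟩
      · exact Or.inl h
      · exact Or.inr h
    by_cases hac : a = c
    · subst hac
      have hy : ∀ p ∈ F, p.2 = a := by
        intro p hp
        rcases hsnd p hp with h | h <;> exact h
      exact hcol F a 2 (by norm_num) hFP hy (fun p hp => hred2 p (hFP p hp))
    · set Fc := F.filter (fun p => p.2 = c) with hFc
      set Fa := F.filter (fun p => p.2 = a) with hFa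
      have hnot : F.filter (fun p => ¬ p.2 = c) = Fa := by
        apply Finset.filter_congr
        intro p hp
        constructor
        · intro h
          rcases hsnd p hp with h' | h'
          · exact absurd h' h
          · exact h'
        · intro h hcc
          exact hac (h.symm.trans hcc)
      have hFsplit : ∑ p ∈ F, f p = ∑ p ∈ Fc, f p + ∑ p ∈ Fa, f p := by
        rw [← Finset.sum_filter_add_sum_filter_not F (fun p => p.2 = c) f, hnot]
      have hFcP : ∀ p ∈ Fc, p ∈ P := fun p hp => hFP p (Finset.mem_filter.mp hp).1
      have hFaP : ∀ p ∈ Fa, p ∈ P := fun p hp => hFP p (Finset.mem_filter.mp hp).1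
      have hFcy : ∀ p ∈ Fc, p.2 = c := fun p hp => (Finset.mem_filter.mp hp).2
      have hFay : ∀ p ∈ Fa, p.2 = a := fun p hp => (Finset.mem_filter.mp hp).2
      have h2cv : (2:ℝ) / cv = 1 / cv + 1 / cv := by ring
      rcases Fc.eq_empty_or_nonempty with hce | ⟨pc, hpc⟩
      · rcases Fa.eq_empty_or_nonempty with hae | hae
        · rw [hFsplit, hce, hae, Finset.sum_empty]
          have h00 : (0:ℝ) ≤ 2 / cv := div_nonneg (by norm_num) hcv0.le
          simpa using h00
        · have hb2 := hcol Fa a 2 (by norm_num) hFaP hFay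
            (fun p hp => hred2 p (hFaP p hp))
          rw [hFsplit, hce, Finset.sum_empty]
          linarith
      · rcases Fa.eq_empty_or_nonempty with hae | ⟨pa, hpa⟩
        · have hb2 := hcol Fc c 2 (by norm_num) hFcP hFcy
            (fun p hp => hred2 p (hFcP p hp))
          rw [hFsplit, hae, Finset.sum_empty]
          linarith
        · -- both columns active
          have hcNv : c ∈ cnbr G v := by
            have := (hfacts pc (hFcP pc hpc)).2.1
            rwa [hFcy pc hpc] at this
          have haNv : a ∈ cnbr G v := by
            have := (hfacts pa (hFaP pa hpa)).2.1
            rwa [hFay pa hpa] at this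
          have hred1 : ∀ p ∈ F, ((G.dist p.1 p.2 : ℝ) - (G'.dist p.1 p.2 : ℝ)) ≤ 1 := by
            intro p hp
            have hpP := hFP p hp
            obtain ⟨hd3, hd1, hlt'⟩ := hdistfacts p hpP
            by_cases hA : G'.Adj p.1 p.2
            · have hσp := Stmt10Aux.sigmaE_of_adj (G := G) hA
              have heq : s(p.1, p.2) = s(a, c) := hσp.symm.trans (hFσ p hp)
              have hmem : p.1 ∈ cnbr G v ∧ p.2 ∈ cnbr G v := by
                rcases Sym2.eq_iff.mp heq with ⟨h1, h2⟩ | ⟨h1, h2⟩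
                · exact ⟨by rw [h1]; exact haNv, by rw [h2]; exact hcNv⟩
                · exact ⟨by rw [h1]; exact hcNv, by rw [h2]; exact haNv⟩
              have hD2 : G.dist p.1 p.2 ≤ 2 := Stmt10Aux.dist_le_two_cnbr hmem.1 hmem.2
              have hD'1 : G'.dist p.1 p.2 = 1 := SimpleGraph.dist_eq_one_iff_adj.mpr hA
              have c1 : (G.dist p.1 p.2 : ℝ) ≤ 2 := by exact_mod_cast hD2
              rw [hD'1]
              push_cast
              linarith
            · have h2le : 2 ≤ G'.dist p.1 p.2 := by
                by_contra hcon
                have h1' : G'.dist p.1 p.2 = 1 := by omega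
                exact hA (SimpleGraph.dist_eq_one_iff_adj.mp h1')
              have c1 : (G.dist p.1 p.2 : ℝ) ≤ 3 := by exact_mod_cast hd3
              have c2 : (2:ℝ) ≤ (G'.dist p.1 p.2 : ℝ) := by exact_mod_cast h2le
              linarith
          have hbc := hcol Fc c 1 zero_le_one hFcP hFcy
            (fun p hp => hred1 p (Finset.mem_filter.mp hp).1)
          have hba := hcol Fa a 1 zero_le_one hFaP hFay
            (fun p hp => hred1 p (Finset.mem_filter.mp hp).1)
          rw [hFsplit]
          linarith
  -- total reduction bound
  have hRle : ∑ p ∈ P, f p ≤ (n:ℝ) * (2 / cv) := by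
    rw [← Finset.sum_fiberwise_of_maps_to hmaps f]
    calc ∑ e ∈ D, ∑ p ∈ P.filter (fun p => Stmt10Aux.sigmaE G G' p = e), f p
        ≤ D.card • (2 / cv) := Finset.sum_le_card_nsmul _ _ _ key4
      _ = (n:ℝ) * (2 / cv) := by rw [nsmul_eq_mul, hn]
  -- arithmetic endgame
  have hq0 : 0 < q := by
    rw [hq]
    exact Nat.lcm_pos (Nat.succ_pos _) (Nat.succ_pos _)
  have hdvd : (degG G v + 1) ∣ q := by
    rw [hq]
    exact Nat.dvd_lcm_right _ _
  have hbq : b * (degG G v + 1) = q := by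
    rw [hb]
    exact Nat.div_mul_cancel hdvd
  have hb0 : 0 < b := by
    rcases Nat.eq_zero_or_pos b with h | h
    · rw [h] at hbq
      omega
    · exact h
  have hqR : (q:ℝ) = (b:ℝ) * cv := by
    rw [← hbq]
    push_cast
    ring
  have hq0' : (0:ℝ) < (q:ℝ) := by exact_mod_cast hq0
  have hE : EMDG G u v ≤ planCostG G' u v z + ∑ p ∈ P, f p := by
    rw [hsum2, ← hcostG]
    exact hEMDle
  have h1 : (q:ℝ) * EMDG G u v ≤
      (q:ℝ) * planCostG G' u v z + (q:ℝ) * ∑ p ∈ P, f p := by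
    have := mul_le_mul_of_nonneg_left hE (le_of_lt hq0')
    rw [mul_add] at this
    exact this
  have h2 : (q:ℝ) * planCostG G' u v z < (q:ℝ) := by nlinarith
  have h3 : (q:ℝ) * (∑ p ∈ P, f p) ≤ (q:ℝ) * ((n:ℝ) * (2 / cv)) :=
    mul_le_mul_of_nonneg_left hRle (le_of_lt hq0')
  have h4 : (q:ℝ) * ((n:ℝ) * (2 / cv)) = 2 * (b:ℝ) * (n:ℝ) := by
    rw [hqR]
    field_simp
  have hchain : (ρ:ℝ) < 2 * (b:ℝ) * (n:ℝ) := by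
    rw [hρ]
    nlinarith [h1, h2, h3, h4]
  have hZ : ρ < 2 * (b:ℤ) * (n:ℤ) := by exact_mod_cast hchain
  have hZ1 : ρ + 1 ≤ 2 * (b:ℤ) * (n:ℤ) := hZ
  have hchain2 : (ρ:ℝ) + 1 ≤ 2 * (b:ℝ) * (n:ℝ) := by exact_mod_cast hZ1
  have hb0' : (0:ℝ) < (b:ℝ) := by exact_mod_cast hb0
  rw [hncard, div_le_iff₀ (by linarith : (0:ℝ) < 2 * (b:ℝ))]
  nlinarith [hchain2]
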